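/- Let φ : ℝ → [0,∞) be a probability density function whose CDF Φ(x) := ∫_{−∞}^x φ(t) dt is continuous, strictly increasing and surjective onto (0,1). Then for all k, k′ ∈ N₂, m ∈ L_{k,2} and m′ ∈ L_{k′,2}: ∫_ℝ w^{(φ)}_{k,m,2}(x) · w^{(φ)}_{k′,m′,2}(x) · φ(x) dx = 1 if (k,m) = (k′,m′) and = 0 otherwise; that is, the functions w^{(φ)}_{k,m,2} form an orthonormal system in L²(ℝ, φ(x)dx). -/

import Mathlib

open scoped Classical
open MeasureTheory

open scoped Classical
open MeasureTheory

noncomputable section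

/-- The binary digit `ξ_{i+1}` of `x ∈ [0,1)`. -/
def rdigit (x : ℝ) (i : ℕ) : ℕ := (⌊x * 2 ^ (i + 1)⌋).toNat % 2

/-- The `k`-th Walsh function in base `2`. -/
def walsh (k : ℕ) (x : ℝ) : ℝ :=
  (-1 : ℝ) ^ ∑ i ∈ Finset.range (Nat.size k), (Nat.testBit k i).toNat * rdigit x i

/-- `k` is a sum of two distinct powers of two, i.e. `k ∈ N₂ ∖ N₁`. -/
def twoBit (k : ℕ) : Prop := ∃ a₁ a₂ : ℕ, a₂ < a₁ ∧ k = 2 ^ a₁ + 2 ^ a₂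

/-- `k ∈ N₁`, i.e. `k = 0` or `k` is a power of two. -/
def inN1 (k : ℕ) : Prop := k = 0 ∨ ∃ a : ℕ, k = 2 ^ a

/-- `k ∈ N₂`. -/
def inN2 (k : ℕ) : Prop := inN1 k ∨ twoBit k

/-- For `k = 2^{a₁} + 2^{a₂}` with `a₁ > a₂`, this is the smaller exponent `a₂`. -/
def lowExp (k : ℕ) : ℕ := Nat.log2 (k % 2 ^ Nat.log2 k)

/-- The index set `L_{k,2}`. -/
def L2 (k : ℕ) : Set ℕ := if twoBit k then {m | m < 2 ^ lowExp k} else {0}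

/-- The order-2 localized Walsh function `w_{k,m,2}`. -/
def w2 (k m : ℕ) (x : ℝ) : ℝ :=
  if twoBit k then
    Real.sqrt (2 ^ lowExp k) *
      Set.indicator (Set.Ico ((m : ℝ) / 2 ^ lowExp k) (((m : ℝ) + 1) / 2 ^ lowExp k))
        (fun _ => (1:ℝ)) x *
      walsh k x
  else walsh k x

lemma measurable_rdigit (i : ℕ) : Measurable fun x => rdigit x i := by
  unfold rdigit
  exact (measurable_of_countable (fun n : ℤ => n.toNat % 2)).comp (measurable_id.mul_const _).floor

lemma measurable_walsh (k : ℕ) : Measurable (walsh k) := by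
  unfold walsh
  exact Measurable.pow measurable_const
    (Finset.measurable_sum _ (fun i _ => (measurable_rdigit i).const_mul _))

lemma walsh_zero (x : ℝ) : walsh 0 x = 1 := by
  simp [walsh, Nat.size_zero]

/-- extend the range of the walsh sum -/
lemma walsh_eq_prod (k N : ℕ) (hN : Nat.size k ≤ N) (x : ℝ) :
    walsh k x = ∏ i ∈ Finset.range N, (-1 : ℝ) ^ ((Nat.testBit k i).toNat * rdigit x i) := by
  rw [walsh, ← Finset.prod_pow_eq_pow_sum]
  refine Finset.prod_subset (Finset.range_subset_range.2 hN) ?_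
  intro i _ hi
  simp only [Finset.mem_range, not_lt] at hi
  rw [Nat.testBit_eq_false_of_lt (lt_of_lt_of_le (Nat.lt_size_self k) (Nat.pow_le_pow_right (by norm_num) hi))]
  simp

lemma walsh_mul (k k' : ℕ) (x : ℝ) : walsh k x * walsh k' x = walsh (k ^^^ k') x := by
  set N := max (Nat.size k) (Nat.size k') with hN
  have h1 : Nat.size k ≤ N := le_max_left _ _
  have h2 : Nat.size k' ≤ N := le_max_right _ _
  have h3 : Nat.size (k ^^^ k') ≤ N := by
    rw [Nat.size_le]
    exact Nat.xor_lt_two_pow (lt_of_lt_of_le (Nat.lt_size_self k) (Nat.pow_le_pow_right (by norm_num) h1))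
      (lt_of_lt_of_le (Nat.lt_size_self k') (Nat.pow_le_pow_right (by norm_num) h2))
  rw [walsh_eq_prod k N h1 x, walsh_eq_prod k' N h2 x, walsh_eq_prod _ N h3 x,
    ← Finset.prod_mul_distrib]
  refine Finset.prod_congr rfl fun i _ => ?_
  rw [Nat.testBit_xor]
  rcases Nat.testBit k i with _ | _ <;> rcases Nat.testBit k' i with _ | _ <;>
    simp [← pow_add, ← two_mul, pow_mul]

lemma walsh_sq (k : ℕ) (x : ℝ) : walsh k x * walsh k x = 1 := by
  rw [walsh_mul, Nat.xor_self, walsh_zero]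

lemma walsh_abs_one (k : ℕ) (x : ℝ) : walsh k x = 1 ∨ walsh k x = -1 := by
  unfold walsh
  rcases Nat.even_or_odd (∑ i ∈ Finset.range (Nat.size k), (Nat.testBit k i).toNat * rdigit x i) with h | h
  · left; exact h.neg_one_pow
  · right; exact h.neg_one_pow


lemma rdigit_on_Ico {a j i : ℕ} (hi : i < a) {x : ℝ}
    (hx : x ∈ Set.Ico ((j:ℝ)/2^a) (((j:ℝ)+1)/2^a)) :
    rdigit x i = (Nat.testBit j (a-1-i)).toNat := by
  set e := a - 1 - i with he
  have hae : a = (i+1) + e := by omega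
  obtain ⟨hx1, hx2⟩ := hx
  have h2e : (0:ℝ) < 2 ^ e := by positivity
  have h2i : (0:ℝ) < 2 ^ (i+1) := by positivity
  have hpow : (2:ℝ)^a = 2^(i+1) * 2^e := by rw [hae, pow_add]
  have key1 : ((j / 2^e : ℕ) : ℝ) ≤ x * 2^(i+1) := by
    have h1 : ((j / 2^e : ℕ) : ℝ) * ((2:ℝ)^e) ≤ (j:ℝ) := by
      have h2 := Nat.div_mul_le_self j (2^e)
      calc ((j / 2^e : ℕ) : ℝ) * ((2:ℝ)^e) = ((j / 2^e * 2^e : ℕ) : ℝ) := by push_cast; ring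
      _ ≤ (j:ℝ) := by exact_mod_cast h2
    rw [div_le_iff₀ (by positivity), hpow] at hx1
    nlinarith
  have key2 : x * 2^(i+1) < ((j / 2^e : ℕ) : ℝ) + 1 := by
    have h1 : (j:ℝ) + 1 ≤ (((j / 2^e : ℕ) : ℝ) + 1) * 2^e := by
      have h4 : ((j % 2^e : ℕ):ℝ) + 1 ≤ (2:ℝ)^e := by
        have h6 : j % 2^e + 1 ≤ 2^e := Nat.mod_lt j (show 0 < 2^e by positivity)
        calc ((j % 2^e : ℕ):ℝ) + 1 = ((j % 2^e + 1 : ℕ):ℝ) := by push_cast; ring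
        _ ≤ ((2^e : ℕ):ℝ) := by exact_mod_cast h6
        _ = (2:ℝ)^e := by push_cast; ring
      have h5 : (2:ℝ)^e * ((j/2^e : ℕ):ℝ) + ((j % 2^e : ℕ):ℝ) = (j:ℝ) := by
        exact_mod_cast Nat.div_add_mod j (2^e)
      ring_nf at h5 ⊢; nlinarith [h4, h5]
    rw [lt_div_iff₀ (by positivity), hpow] at hx2
    nlinarith
  have hfl : ⌊x * 2 ^ (i+1)⌋ = ((j / 2 ^ e : ℕ) : ℤ) := by
    rw [Int.floor_eq_iff]
    constructor
    · exact_mod_cast key1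
    · exact_mod_cast key2
  rw [rdigit, hfl, Int.toNat_natCast, Nat.testBit_eq_decide_div_mod_eq]
  rcases Nat.mod_two_eq_zero_or_one (j / 2^e) with h | h <;> simp [h]

def wcoef (n j a : ℕ) : ℝ :=
  (-1:ℝ) ^ ∑ i ∈ Finset.range a, (Nat.testBit n i).toNat * (Nat.testBit j (a-1-i)).toNat

lemma walsh_on_Ico {n a j : ℕ} (hna : Nat.size n ≤ a) {x : ℝ}
    (hx : x ∈ Set.Ico ((j:ℝ)/2^a) (((j:ℝ)+1)/2^a)) : walsh n x = wcoef n j a := by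
  rw [walsh_eq_prod n a hna x, wcoef, ← Finset.prod_pow_eq_pow_sum]
  exact Finset.prod_congr rfl fun i hi => by rw [rdigit_on_Ico (Finset.mem_range.1 hi) hx]

lemma wcoef_pair {n b t m : ℕ} (hbit : Nat.testBit n b = true) :
    wcoef n (2*m+(2*t+1)) (b+1) = - wcoef n (2*m+2*t) (b+1) := by
  unfold wcoef
  rw [Finset.sum_range_succ, Finset.sum_range_succ]
  have h0 : b + 1 - 1 - b = 0 := by omega
  have hcong : ∀ i ∈ Finset.range b,
      (Nat.testBit n i).toNat * (Nat.testBit (2*m+(2*t+1)) (b+1-1-i)).toNat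
        = (Nat.testBit n i).toNat * (Nat.testBit (2*m+2*t) (b+1-1-i)).toNat := by
    intro i hi
    have hlt := Finset.mem_range.1 hi
    have h1 : b + 1 - 1 - i = (b - i - 1) + 1 := by omega
    rw [h1, Nat.testBit_succ, Nat.testBit_succ]
    have h2 : (2*m+(2*t+1))/2 = m + t := by omega
    have h3 : (2*m+2*t)/2 = m + t := by omega
    rw [h2, h3]
  rw [Finset.sum_congr rfl hcong, h0, hbit]
  have e1 : Nat.testBit (2*m+(2*t+1)) 0 = true := by
    rw [Nat.testBit_zero]
    simp only [decide_eq_true_eq]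
    omega
  have e2 : Nat.testBit (2*m+2*t) 0 = false := by
    rw [Nat.testBit_zero]
    simp only [decide_eq_false_iff_not]
    omega
  rw [e1, e2]
  simp [pow_succ, pow_add]

lemma sum_range_two_mul (n : ℕ) (f : ℕ → ℝ) :
    ∑ r ∈ Finset.range (2*n), f r = ∑ t ∈ Finset.range n, (f (2*t) + f (2*t+1)) := by
  induction n with
  | zero => simp
  | succ n ih =>
    have h : 2*(n+1) = (2*n+1)+1 := by ring
    rw [h, Finset.sum_range_succ, Finset.sum_range_succ, ih, Finset.sum_range_succ, add_assoc]

lemma intervalIntegrable_walsh {n : ℕ} {c d : ℝ} :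
    IntervalIntegrable (walsh n) volume c d := by
  rw [intervalIntegrable_iff]
  have : IsFiniteMeasure (volume.restrict (Set.uIoc c d)) :=
    ⟨by rw [Measure.restrict_apply MeasurableSet.univ, Set.univ_inter]; exact measure_Ioc_lt_top⟩
  refine Integrable.mono' (integrable_const 1) ((measurable_walsh n).aestronglyMeasurable) ?_
  refine Filter.Eventually.of_forall fun x => ?_
  rcases walsh_abs_one n x with h | h <;> rw [h] <;> norm_num

lemma integral_walsh_Ico {n a j : ℕ} (hna : Nat.size n ≤ a) :
    ∫ x in Set.Ico ((j:ℝ)/2^a) (((j:ℝ)+1)/2^a), walsh n x = wcoef n j a / 2^a := by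
  rw [setIntegral_congr_fun measurableSet_Ico (fun x hx => walsh_on_Ico hna hx),
    setIntegral_const, measureReal_def, Real.volume_Ico]
  have h : ((j:ℝ)+1)/2^a - (j:ℝ)/2^a = 1/2^a := by field_simp; ring
  rw [h, ENNReal.toReal_ofReal (by positivity), smul_eq_mul]
  ring

lemma testBit_size_sub_one {n : ℕ} (hn : n ≠ 0) : Nat.testBit n (Nat.size n - 1) = true := by
  have ha : 0 < Nat.size n := Nat.size_pos.2 (Nat.pos_of_ne_zero hn)
  have h1 : 2 ^ (Nat.size n - 1) ≤ n := Nat.lt_size.mp (by omega)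
  have h2 : n < 2 ^ Nat.size n := Nat.lt_size_self n
  have h3 : n / 2 ^ (Nat.size n - 1) = 1 := by
    apply Nat.div_eq_of_lt_le (by simpa using h1)
    have : Nat.size n = (Nat.size n - 1) + 1 := by omega
    rw [this, pow_succ] at h2
    omega
  rw [Nat.testBit_eq_decide_div_mod_eq, h3]
  simp

lemma integral_walsh_eq_zero {n s m : ℕ} (hs : s < Nat.size n) :
    ∫ x in Set.Ico ((m:ℝ)/2^s) (((m:ℝ)+1)/2^s), walsh n x = 0 := by
  set a := Nat.size n with hadef
  have hn0 : n ≠ 0 := by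
    intro h; rw [h, Nat.size_zero] at hadef; omega
  have hs' : s < a := hs
  set q := a - s with hq
  have haq : a = s + q := by omega
  have hq1 : 1 ≤ q := by omega
  set F : ℕ → ℝ := fun j => ((m * 2^q + j : ℕ) : ℝ) / 2^a with hF
  have hFle : ∀ i j : ℕ, i ≤ j → F i ≤ F j := by
    intro i j hij
    simp only [hF]
    gcongr <;> omega
  have key : ∀ j : ℕ, (∫ x in (F j)..(F (j+1)), walsh n x) = wcoef n (m*2^q+j) a / 2^a := by
    intro j
    rw [intervalIntegral.integral_of_le (hFle j (j+1) (by omega)),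
      MeasureTheory.integral_Ioc_eq_integral_Ioo, ← MeasureTheory.integral_Ico_eq_integral_Ioo]
    have hrw : F (j+1) = (((m*2^q+j : ℕ):ℝ)+1)/2^a := by
      simp only [hF]; push_cast; ring
    have hrw0 : F j = ((m*2^q+j : ℕ):ℝ)/2^a := rfl
    rw [hrw, hrw0]
    exact integral_walsh_Ico (le_of_eq hadef.symm)
  have hsplit : (∫ x in (F 0)..(F (2^q)), walsh n x)
      = ∑ j ∈ Finset.range (2^q), ∫ x in (F j)..(F (j+1)), walsh n x :=
    (intervalIntegral.sum_integral_adjacent_intervals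
      (fun k _ => intervalIntegrable_walsh)).symm
  have hL : (m:ℝ)/2^s = F 0 := by
    simp only [hF]; push_cast
    rw [haq, pow_add]
    rw [div_eq_div_iff (by positivity) (by positivity)]
    ring
  have hR : ((m:ℝ)+1)/2^s = F (2^q) := by
    simp only [hF]; push_cast
    rw [haq, pow_add]
    rw [div_eq_div_iff (by positivity) (by positivity)]
    ring
  rw [hL, hR, MeasureTheory.integral_Ico_eq_integral_Ioo, ← MeasureTheory.integral_Ioc_eq_integral_Ioo,
    ← intervalIntegral.integral_of_le (hFle 0 (2^q) (by positivity)), hsplit,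
    Finset.sum_congr rfl (fun j _ => key j)]
  have h2q : 2^q = 2 * 2^(q-1) := by
    rw [← pow_succ']
    congr 1
    omega
  rw [h2q, sum_range_two_mul]
  apply Finset.sum_eq_zero
  intro t _
  have hbit : Nat.testBit n (a-1) = true := testBit_size_sub_one hn0
  have ha1 : a = (a-1)+1 := by omega
  have e1 : m * (2*2^(q-1)) + 2*t = 2*(m*2^(q-1)) + 2*t := by ring
  have e2 : m * (2*2^(q-1)) + (2*t+1) = 2*(m*2^(q-1)) + (2*t+1) := by ring
  rw [e1, e2, ha1, wcoef_pair hbit]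
  ring


lemma testBit_two_pow_add {a x i : ℕ} (hx : x < 2^a) :
    Nat.testBit (2^a + x) i = if i = a then true else Nat.testBit x i := by
  rcases lt_trichotomy i a with h | h | h
  · rw [if_neg (by omega)]
    exact Nat.testBit_two_pow_add_gt h x
  · subst h
    rw [if_pos rfl, Nat.testBit_two_pow_add_eq, Nat.testBit_eq_false_of_lt hx]
    rfl
  · rw [if_neg (by omega), Nat.testBit_eq_false_of_lt, Nat.testBit_eq_false_of_lt]
    · exact lt_of_lt_of_le hx (Nat.pow_le_pow_right (by norm_num) (by omega))
    · calc 2^a + x < 2^a + 2^a := by omega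
      _ = 2^(a+1) := by rw [pow_succ]; ring
      _ ≤ 2^i := Nat.pow_le_pow_right (by norm_num) (by omega)

lemma testBit_twoBit {a₁ a₂ i : ℕ} (h : a₂ < a₁) :
    Nat.testBit (2^a₁ + 2^a₂) i = (decide (i = a₁) || decide (i = a₂)) := by
  rw [testBit_two_pow_add (Nat.pow_lt_pow_right (by norm_num) h), Nat.testBit_two_pow]
  rcases eq_or_ne i a₁ with h1 | h1 <;> rcases eq_or_ne i a₂ with h2 | h2 <;>
    simp [h1, h2] <;> omega

lemma size_twoBit {a₁ a₂ : ℕ} (h : a₂ < a₁) : Nat.size (2^a₁ + 2^a₂) = a₁ + 1 := by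
  have h1 : 2^a₁ + 2^a₂ < 2^(a₁+1) := by
    have := Nat.pow_lt_pow_right (show 1 < 2 by norm_num) h
    rw [pow_succ]; omega
  have h2 : 2^a₁ ≤ 2^a₁ + 2^a₂ := Nat.le_add_right _ _
  have := Nat.size_le.2 h1
  have := Nat.lt_size.2 h2
  omega

lemma size_two_pow (a : ℕ) : Nat.size (2^a) = a + 1 := by
  have h1 : (2:ℕ)^a < 2^(a+1) := Nat.pow_lt_pow_right (by norm_num) (by omega)
  have := Nat.size_le.2 h1
  have := Nat.lt_size.2 (le_refl ((2:ℕ)^a))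
  omega

lemma lowExp_twoBit {a₁ a₂ : ℕ} (h : a₂ < a₁) : lowExp (2^a₁ + 2^a₂) = a₂ := by
  have hlog : Nat.log2 (2^a₁ + 2^a₂) = a₁ := by
    have hne : 2^a₁ + 2^a₂ ≠ 0 := by positivity
    have h1 : 2^a₁ + 2^a₂ < 2^(a₁+1) := by
      have := Nat.pow_lt_pow_right (show 1 < 2 by norm_num) h
      rw [pow_succ]; omega
    have hlt := (Nat.log2_lt hne).2 h1
    have hge := (Nat.le_log2 hne).2 (Nat.le_add_right _ _)
    omega
  rw [lowExp, hlog, Nat.add_mod_left, Nat.mod_eq_of_lt (Nat.pow_lt_pow_right (by norm_num) h),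
    Nat.log2_two_pow]

lemma twoPow_not_twoBit {a : ℕ} : ¬ twoBit (2^a) := by
  rintro ⟨a₁, a₂, h, heq⟩
  have p2 : 0 < 2^a₂ := Nat.pow_pos (by norm_num)
  have hlt : 2^a₁ < 2^a := by omega
  have ha : a₁ < a := (Nat.pow_lt_pow_iff_right (by norm_num)).1 hlt
  have h2 : 2^(a₁+1) ≤ 2^a := Nat.pow_le_pow_right (by norm_num) (by omega)
  have h3 : 2^a₂ < 2^a₁ := Nat.pow_lt_pow_right (by norm_num) h
  rw [pow_succ] at h2
  omega

lemma zero_not_twoBit : ¬ twoBit 0 := by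
  rintro ⟨a₁, a₂, h, heq⟩
  have : (0:ℕ) < 2^a₁ := Nat.pow_pos (by norm_num)
  have : (0:ℕ) < 2^a₂ := Nat.pow_pos (by norm_num)
  omega

lemma inN1_not_twoBit {k : ℕ} (h : inN1 k) : ¬ twoBit k := by
  rcases h with rfl | ⟨a, rfl⟩
  · exact zero_not_twoBit
  · exact twoPow_not_twoBit

def scale (k : ℕ) : ℕ := if twoBit k then lowExp k else 0

lemma scale_twoBit {a₁ a₂ : ℕ} (h : a₂ < a₁) : scale (2^a₁ + 2^a₂) = a₂ := by
  rw [scale, if_pos ⟨a₁, a₂, h, rfl⟩, lowExp_twoBit h]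

lemma scale_inN1 {k : ℕ} (h : inN1 k) : scale k = 0 := by
  rw [scale, if_neg (inN1_not_twoBit h)]

/-- if `k ≠ k'` in `N₂` then the xor has a bit at position `≥ max scale`. -/
lemma scale_lt_size_xor {k k' : ℕ} (hk : inN2 k) (hk' : inN2 k') (hne : k ≠ k')
    (hss : scale k' ≤ scale k) : scale k < Nat.size (k ^^^ k') := by
  -- suffices to find a bit i ≥ scale k where k and k' differ
  suffices h : ∃ i, scale k ≤ i ∧ Nat.testBit k i ≠ Nat.testBit k' i by
    obtain ⟨i, hi, hbit⟩ := h
    have hx : Nat.testBit (k ^^^ k') i = true := by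
      rw [Nat.testBit_xor]
      revert hbit
      rcases Nat.testBit k i with _|_ <;> rcases Nat.testBit k' i with _|_ <;> simp
    have h1 : 2^i ≤ k ^^^ k' := Nat.ge_two_pow_of_testBit hx
    have h2 : 2^(scale k) ≤ 2^i := Nat.pow_le_pow_right (by norm_num) hi
    exact Nat.lt_size.2 (le_trans h2 h1)
  by_cases htb : twoBit k
  · obtain ⟨a₁, a₂, ha, rfl⟩ := htb
    have hsc : scale (2^a₁+2^a₂) = a₂ := scale_twoBit ha
    rw [hsc]
    have hbk : ∀ i, Nat.testBit (2^a₁+2^a₂) i = (decide (i = a₁) || decide (i = a₂)) :=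
      fun i => testBit_twoBit ha
    by_cases hb1 : Nat.testBit k' a₁ = true
    · -- k' has bit a₁
      rcases hk' with hk1 | ⟨b₁, b₂, hb, rfl⟩
      · -- k' = 0 or 2^b
        rcases hk1 with rfl | ⟨b, rfl⟩
        · simp at hb1
        · have := Nat.testBit_two_pow (n := b) (m := a₁)
          rw [hb1] at this
          have hba : b = a₁ := by simpa using this.symm
          subst hba
          refine ⟨a₂, le_refl _, ?_⟩
          rw [hbk, Nat.testBit_two_pow_of_ne (by omega)]
          simp
      · -- k' = 2^b₁ + 2^b₂
        have hbk' : ∀ i, Nat.testBit (2^b₁+2^b₂) i = (decide (i = b₁) || decide (i = b₂)) :=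
          fun i => testBit_twoBit hb
        have hsc' : scale (2^b₁+2^b₂) = b₂ := scale_twoBit hb
        rw [hbk'] at hb1
        simp only [Bool.or_eq_true, decide_eq_true_eq] at hb1
        rcases hb1 with rfl | rfl
        · -- a₁ = b₁ : differ at a₂ or b₂, and b₂ ≤ a₂ (from hss), b₂ ≠ a₂ (else k = k')
          have hbb : b₂ ≤ a₂ := by rw [hsc, hsc'] at hss; exact hss
          have hneq : b₂ ≠ a₂ := by
            intro hc; subst hc; exact hne rfl
          refine ⟨a₂, le_refl _, ?_⟩
          rw [hbk, hbk']
          have d1 : decide (a₂ = a₁) = false := by simp only [decide_eq_false_iff_not]; omega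
          have d2 : decide (a₂ = a₂) = true := by simp
          have d3 : decide (a₂ = b₂) = false := by simp only [decide_eq_false_iff_not]; omega
          rw [d1, d2, d3]
          simp
        · -- a₁ = b₂ < b₁ : impossible since b₂ = scale k' ≤ a₂ < a₁
          rw [hsc, hsc'] at hss
          omega
    · exact ⟨a₁, by omega, by rw [hbk]; simp [hb1]⟩
  · -- k ∈ N₁, scale k = 0
    have hsk : scale k = 0 := by rw [scale, if_neg htb]
    rw [hsk]
    have hxne : k ^^^ k' ≠ 0 := fun hc => hne (xor_eq_zero_iff.1 hc)
    have hb := testBit_size_sub_one hxne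
    refine ⟨Nat.size (k^^^k') - 1, Nat.zero_le _, ?_⟩
    intro hc
    rw [Nat.testBit_xor, hc] at hb
    simp at hb


lemma mem_L2 {k m : ℕ} (h : m ∈ L2 k) : m < 2 ^ scale k := by
  by_cases htb : twoBit k
  · rw [L2, if_pos htb] at h
    rw [scale, if_pos htb]
    exact h
  · rw [L2, if_neg htb] at h
    rw [scale, if_neg htb, pow_zero]
    simp only [Set.mem_singleton_iff] at h
    omega

/-- uniform form of `w2` on `[0,1)`. -/
lemma w2_eq {k m : ℕ} (hm : m ∈ L2 k) {y : ℝ} (hy : y ∈ Set.Ico (0:ℝ) 1) :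
    w2 k m y = Real.sqrt (2 ^ scale k) *
      Set.indicator (Set.Ico ((m : ℝ) / 2 ^ scale k) (((m : ℝ) + 1) / 2 ^ scale k))
        (fun _ => (1:ℝ)) y * walsh k y := by
  by_cases htb : twoBit k
  · rw [w2, if_pos htb, scale, if_pos htb]
  · rw [w2, if_neg htb, scale, if_neg htb]
    rw [L2, if_neg htb] at hm
    simp only [Set.mem_singleton_iff] at hm
    subst hm
    simp only [pow_zero, Real.sqrt_one, div_one, Nat.cast_zero, zero_add, one_mul]
    rw [Set.indicator_of_mem hy]
    ring

lemma measurable_w2 (k m : ℕ) : Measurable (w2 k m) := by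
  unfold w2
  by_cases htb : twoBit k
  · simp only [if_pos htb]
    exact ((measurable_const.mul (measurable_one.indicator measurableSet_Ico)).mul
      (measurable_walsh k))
  · simp only [if_neg htb]
    exact measurable_walsh k

lemma DI_subset_unit {s m : ℕ} (hm : m < 2^s) :
    Set.Ico ((m:ℝ)/2^s) (((m:ℝ)+1)/2^s) ⊆ Set.Ico (0:ℝ) 1 := by
  intro x ⟨hx1, hx2⟩
  constructor
  · exact le_trans (by positivity) hx1
  · refine lt_of_lt_of_le hx2 ?_
    rw [div_le_one (by positivity)]
    have : (m:ℝ) + 1 ≤ 2^s := by exact_mod_cast hm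
    exact this

lemma ae_inter_Ioo {S : Set ℝ} (hS : S ⊆ Set.Ico 0 1) :
    (S ∩ Set.Ioo (0:ℝ) 1 : Set ℝ) =ᵐ[volume] S := by
  rw [Filter.eventuallyEq_set]
  have hnull : volume ({(0:ℝ)} : Set ℝ) = 0 := measure_singleton 0
  refine Filter.Eventually.mono (MeasureTheory.measure_eq_zero_iff_ae_notMem.1 hnull) ?_
  intro x hx
  simp only [Set.mem_inter_iff, Set.mem_Ioo, Set.mem_singleton_iff] at *
  constructor
  · rintro ⟨h1, _⟩; exact h1
  · intro h1
    obtain ⟨h2, h3⟩ := hS h1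
    exact ⟨h1, lt_of_le_of_ne h2 (fun hc => hx hc.symm), h3⟩

lemma DI_disjoint_same {s m m' : ℕ} (h : m ≠ m') :
    (Set.Ico ((m:ℝ)/2^s) (((m:ℝ)+1)/2^s) ∩
      Set.Ico ((m':ℝ)/2^s) (((m':ℝ)+1)/2^s) : Set ℝ) = ∅ := by
  rw [Set.eq_empty_iff_forall_notMem]
  rintro x ⟨⟨h1, h2⟩, ⟨h3, h4⟩⟩
  have h2s : (0:ℝ) < 2^s := by positivity
  rcases lt_or_gt_of_ne h with hc | hc
  · have : ((m:ℝ)+1)/2^s ≤ (m':ℝ)/2^s := by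
      gcongr
      have : (m:ℝ) + 1 ≤ (m':ℝ) := by exact_mod_cast hc
      linarith
    linarith
  · have : ((m':ℝ)+1)/2^s ≤ (m:ℝ)/2^s := by
      gcongr
      have : (m':ℝ) + 1 ≤ (m:ℝ) := by exact_mod_cast hc
      linarith
    linarith

lemma DI_subset_or_disjoint {s s' m m' : ℕ} (hss : s' ≤ s) :
    Set.Ico ((m:ℝ)/2^s) (((m:ℝ)+1)/2^s) ⊆ Set.Ico ((m':ℝ)/2^s') (((m':ℝ)+1)/2^s')
    ∨ (Set.Ico ((m:ℝ)/2^s) (((m:ℝ)+1)/2^s) ∩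
        Set.Ico ((m':ℝ)/2^s') (((m':ℝ)+1)/2^s') : Set ℝ) = ∅ := by
  set e := s - s' with he
  have hse : s = s' + e := by omega
  have hdiv1 : ∀ u v : ℕ, v * 2^e ≤ u → (v:ℝ)/2^s' ≤ (u:ℝ)/2^s := by
    intro u v h
    rw [div_le_div_iff₀ (by positivity) (by positivity)]
    have h1 : (v:ℝ) * 2^e ≤ (u:ℝ) := by exact_mod_cast h
    calc (v:ℝ) * 2^s = (v:ℝ) * 2^e * 2^s' := by rw [hse, pow_add]; ring
    _ ≤ (u:ℝ) * 2^s' := by nlinarith [show (0:ℝ) < 2^s' by positivity]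
  have hdiv2 : ∀ u v : ℕ, u ≤ v * 2^e → (u:ℝ)/2^s ≤ (v:ℝ)/2^s' := by
    intro u v h
    rw [div_le_div_iff₀ (by positivity) (by positivity)]
    have h1 : (u:ℝ) ≤ (v:ℝ) * 2^e := by exact_mod_cast h
    calc (u:ℝ) * 2^s' ≤ (v:ℝ) * 2^e * 2^s' := by nlinarith [show (0:ℝ) < 2^s' by positivity]
    _ = (v:ℝ) * 2^s := by rw [hse, pow_add]; ring
  by_cases hc : m' * 2^e ≤ m ∧ m + 1 ≤ (m'+1) * 2^e
  · left
    rintro x ⟨hx1, hx2⟩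
    constructor
    · exact le_trans (hdiv1 m m' hc.1) hx1
    · refine lt_of_lt_of_le hx2 ?_
      have := hdiv2 (m+1) (m'+1) hc.2
      push_cast at this
      exact this
  · right
    rw [Set.eq_empty_iff_forall_notMem]
    rintro x ⟨⟨h1, h2⟩, ⟨h3, h4⟩⟩
    rcases not_and_or.1 hc with hc1 | hc1
    · have hle : m + 1 ≤ m' * 2^e := by omega
      have := hdiv2 (m+1) m' hle
      push_cast at this
      linarith
    · have hle : (m'+1) * 2^e ≤ m := by omega
      have := hdiv1 m (m'+1) hle
      push_cast at this
      linarith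

lemma integral_indicator_walsh {s m : ℕ} (hm : m < 2^s) (n : ℕ) :
    ∫ y in Set.Ioo (0:ℝ) 1,
        Set.indicator (Set.Ico ((m:ℝ)/2^s) (((m:ℝ)+1)/2^s)) (fun _ => (1:ℝ)) y * walsh n y
      = ∫ y in Set.Ico ((m:ℝ)/2^s) (((m:ℝ)+1)/2^s), walsh n y := by
  have hcong : ∀ y ∈ Set.Ioo (0:ℝ) 1,
      Set.indicator (Set.Ico ((m:ℝ)/2^s) (((m:ℝ)+1)/2^s)) (fun _ => (1:ℝ)) y * walsh n y
        = Set.indicator (Set.Ico ((m:ℝ)/2^s) (((m:ℝ)+1)/2^s)) (walsh n) y := by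
    intro y _
    by_cases hA : y ∈ Set.Ico ((m:ℝ)/2^s) (((m:ℝ)+1)/2^s) <;>
      simp [Set.indicator_apply, hA]
  rw [setIntegral_congr_fun measurableSet_Ioo hcong,
    MeasureTheory.integral_indicator measurableSet_Ico,
    Measure.restrict_restrict measurableSet_Ico]
  exact setIntegral_congr_set (ae_inter_Ioo (DI_subset_unit hm))

lemma zero_core {k k' m m' : ℕ} (hk : inN2 k) (hk' : inN2 k') (hne : k ≠ k')
    (hm : m < 2 ^ scale k) (hss : scale k' ≤ scale k) :
    ∫ y in Set.Ioo (0:ℝ) 1,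
      Set.indicator ((Set.Ico ((m:ℝ)/2^scale k) (((m:ℝ)+1)/2^scale k)) ∩
          (Set.Ico ((m':ℝ)/2^scale k') (((m':ℝ)+1)/2^scale k'))) (fun _ => (1:ℝ)) y
        * walsh (k ^^^ k') y = 0 := by
  rcases DI_subset_or_disjoint (m := m) (m' := m') hss with hsub | hdisj
  · rw [Set.inter_eq_self_of_subset_left hsub]
    rw [integral_indicator_walsh hm (k ^^^ k')]
    exact integral_walsh_eq_zero (scale_lt_size_xor hk hk' hne hss)
  · rw [hdisj]
    simp

lemma unit_integral {k k' m m' : ℕ} (hk : inN2 k) (hk' : inN2 k')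
    (hm : m ∈ L2 k) (hm' : m' ∈ L2 k') :
    ∫ y in Set.Ioo (0:ℝ) 1, w2 k m y * w2 k' m' y
      = if (k, m) = (k', m') then 1 else 0 := by
  have hmlt := mem_L2 hm
  have hmlt' := mem_L2 hm'
  have hcong : ∀ y ∈ Set.Ioo (0:ℝ) 1, w2 k m y * w2 k' m' y
      = (Real.sqrt (2^scale k) * Real.sqrt (2^scale k')) *
        (Set.indicator ((Set.Ico ((m:ℝ)/2^scale k) (((m:ℝ)+1)/2^scale k)) ∩
            (Set.Ico ((m':ℝ)/2^scale k') (((m':ℝ)+1)/2^scale k'))) (fun _ => (1:ℝ)) y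
          * walsh (k ^^^ k') y) := by
    intro y hy
    have hy' : y ∈ Set.Ico (0:ℝ) 1 := ⟨le_of_lt hy.1, hy.2⟩
    rw [w2_eq hm hy', w2_eq hm' hy', ← walsh_mul]
    have hind : Set.indicator ((Set.Ico ((m:ℝ)/2^scale k) (((m:ℝ)+1)/2^scale k)) ∩
          (Set.Ico ((m':ℝ)/2^scale k') (((m':ℝ)+1)/2^scale k'))) (fun _ => (1:ℝ)) y
        = Set.indicator (Set.Ico ((m:ℝ)/2^scale k) (((m:ℝ)+1)/2^scale k)) (fun _ => (1:ℝ)) y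
          * Set.indicator (Set.Ico ((m':ℝ)/2^scale k') (((m':ℝ)+1)/2^scale k')) (fun _ => (1:ℝ)) y := by
      by_cases hA : y ∈ Set.Ico ((m:ℝ)/2^scale k) (((m:ℝ)+1)/2^scale k) <;>
        by_cases hB : y ∈ Set.Ico ((m':ℝ)/2^scale k') (((m':ℝ)+1)/2^scale k') <;>
        simp [Set.indicator_apply, hA, hB]
    rw [hind]
    ring
  rw [setIntegral_congr_fun measurableSet_Ioo hcong, MeasureTheory.integral_const_mul]
  by_cases hkk : k = k'
  · subst hkk
    by_cases hmm : m = m'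
    · subst hmm
      rw [if_pos rfl, Set.inter_self, Nat.xor_self, integral_indicator_walsh hmlt 0]
      have hone : ∀ y ∈ Set.Ico ((m:ℝ)/2^scale k) (((m:ℝ)+1)/2^scale k), walsh 0 y = 1 :=
        fun y _ => walsh_zero y
      rw [setIntegral_congr_fun measurableSet_Ico hone, setIntegral_const, measureReal_def, Real.volume_Ico]
      have h1 : ((m:ℝ)+1)/2^scale k - (m:ℝ)/2^scale k = 1/2^scale k := by field_simp; ring
      rw [h1, ENNReal.toReal_ofReal (by positivity), smul_eq_mul, mul_one,
        Real.mul_self_sqrt (by positivity)]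
      field_simp
    · rw [if_neg (by simp [hmm]), DI_disjoint_same hmm]
      simp
  · rw [if_neg (by simp [hkk])]
    rcases le_total (scale k') (scale k) with hss | hss
    · rw [zero_core hk hk' hkk hmlt hss, mul_zero]
    · have hz := zero_core (m := m') (m' := m) hk' hk (fun hc => hkk hc.symm) hmlt' hss
      rw [Set.inter_comm, Nat.xor_comm] at hz
      rw [hz, mul_zero]

theorem stmt5 (φ : ℝ → ℝ) (hφ0 : ∀ x, 0 ≤ φ x) (hφint : Integrable φ)
    (hφ1 : (∫ x, φ x) = 1)
    (Φ : ℝ → ℝ) (hΦdef : ∀ x, Φ x = ∫ t in Set.Iic x, φ t)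
    (hΦcont : Continuous Φ) (hΦmono : StrictMono Φ)
    (hΦrange : Set.range Φ = Set.Ioo 0 1)
    (k k' m m' : ℕ) (hk : inN2 k) (hk' : inN2 k')
    (hm : m ∈ L2 k) (hm' : m' ∈ L2 k') :
    (∫ x : ℝ, w2 k m (Φ x) * w2 k' m' (Φ x) * φ x)
      = if (k, m) = (k', m') then 1 else 0 := by
  classical
  set f : ℝ → NNReal := fun x => Real.toNNReal (φ x) with hfdef
  have hfmeas : AEMeasurable f volume :=
    measurable_real_toNNReal.comp_aemeasurable hφint.aemeasurable
  set μ : Measure ℝ := volume.withDensity (fun x => (f x : ENNReal)) with hμdef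
  have hcoe : ∀ x : ℝ, ((f x : ENNReal)) = ENNReal.ofReal (φ x) := fun x => rfl
  have hμA : ∀ A : Set ℝ, MeasurableSet A → μ A = ENNReal.ofReal (∫ x in A, φ x) := by
    intro A hA
    rw [hμdef, withDensity_apply _ hA,
      ofReal_integral_eq_lintegral_ofReal (hφint.integrableOn)
        (Filter.Eventually.of_forall (fun x => hφ0 x))]
    exact lintegral_congr fun x => hcoe x
  have hμuniv : IsProbabilityMeasure μ := by
    constructor
    rw [hμA Set.univ MeasurableSet.univ, MeasureTheory.setIntegral_univ, hφ1,
      ENNReal.ofReal_one]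
  have hrange : ∀ x, Φ x ∈ Set.Ioo (0:ℝ) 1 := fun x => hΦrange ▸ Set.mem_range_self x
  have hmap : Measure.map Φ μ = volume.restrict (Set.Ioo 0 1) := by
    have : IsProbabilityMeasure (Measure.map Φ μ) :=
      MeasureTheory.Measure.isProbabilityMeasure_map hΦcont.measurable.aemeasurable
    refine Measure.ext_of_Iic (Measure.map Φ μ) (volume.restrict (Set.Ioo 0 1)) fun y => ?_
    rw [Measure.map_apply hΦcont.measurable measurableSet_Iic,
      Measure.restrict_apply measurableSet_Iic]
    rcases le_or_gt y 0 with hy0 | hy0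
    · have h1 : Φ ⁻¹' Set.Iic y = ∅ := by
        rw [Set.eq_empty_iff_forall_notMem]
        intro x hx
        have ha := (hrange x).1
        have h2 : Φ x ≤ y := hx
        linarith
      have h2 : Set.Iic y ∩ Set.Ioo (0:ℝ) 1 = ∅ := by
        rw [Set.eq_empty_iff_forall_notMem]
        rintro z ⟨hz1, hz2, _⟩
        simp only [Set.mem_Iic] at hz1
        linarith
      rw [h1, h2]
      simp
    · rcases lt_or_ge y 1 with hy1 | hy1
      · obtain ⟨x₀, hx₀⟩ : ∃ x₀, Φ x₀ = y := by
          have hmem : y ∈ Set.range Φ := by rw [hΦrange]; exact Set.mem_Ioo.2 ⟨hy0, hy1⟩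
          exact hmem
        have h1 : Φ ⁻¹' Set.Iic y = Set.Iic x₀ := by
          ext x
          simp only [Set.mem_preimage, Set.mem_Iic, ← hx₀]
          exact ⟨fun h => (hΦmono.le_iff_le).1 h, fun h => hΦmono.monotone h⟩
        have h2 : Set.Iic y ∩ Set.Ioo (0:ℝ) 1 = Set.Ioc 0 y := by
          ext z
          simp only [Set.mem_inter_iff, Set.mem_Iic, Set.mem_Ioo, Set.mem_Ioc]
          constructor
          · rintro ⟨hz1, hz2, _⟩; exact ⟨hz2, hz1⟩
          · rintro ⟨hz1, hz2⟩; exact ⟨hz2, hz1, lt_of_le_of_lt hz2 hy1⟩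
        rw [h1, h2, hμA _ measurableSet_Iic, ← hΦdef x₀, hx₀, Real.volume_Ioc]
        norm_num
      · have h1 : Φ ⁻¹' Set.Iic y = Set.univ := by
          ext x
          simp only [Set.mem_preimage, Set.mem_Iic, Set.mem_univ, iff_true]
          exact le_trans (le_of_lt (hrange x).2) hy1
        have h2 : Set.Iic y ∩ Set.Ioo (0:ℝ) 1 = Set.Ioo 0 1 := by
          apply Set.inter_eq_self_of_subset_right
          rintro z ⟨hz1, hz2⟩
          exact Set.mem_Iic.2 (le_trans (le_of_lt hz2) hy1)
        rw [h1, h2, hμuniv.measure_univ, Real.volume_Ioo]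
        norm_num
  have hgmeas : Measurable (fun y => w2 k m y * w2 k' m' y) :=
    (measurable_w2 k m).mul (measurable_w2 k' m')
  have step1 : (∫ x : ℝ, w2 k m (Φ x) * w2 k' m' (Φ x) * φ x)
      = ∫ x : ℝ, f x • (w2 k m (Φ x) * w2 k' m' (Φ x)) := by
    refine integral_congr_ae (Filter.Eventually.of_forall fun x => ?_)
    show w2 k m (Φ x) * w2 k' m' (Φ x) * φ x = f x • (w2 k m (Φ x) * w2 k' m' (Φ x))
    rw [NNReal.smul_def, Real.coe_toNNReal _ (hφ0 x), smul_eq_mul]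
    ring
  have step2 := integral_withDensity_eq_integral_smul₀ hfmeas
    (fun x => w2 k m (Φ x) * w2 k' m' (Φ x))
  have step3 := MeasureTheory.integral_map (φ := Φ) (μ := μ)
    hΦcont.measurable.aemeasurable
    (hgmeas.aestronglyMeasurable (μ := Measure.map Φ μ))
  rw [hmap] at step3
  rw [step1, ← step2, ← hμdef]
  rw [show (∫ x, w2 k m (Φ x) * w2 k' m' (Φ x) ∂μ)
      = ∫ y in Set.Ioo (0:ℝ) 1, w2 k m y * w2 k' m' y from step3.symm]
  exact unit_integral hk hk' hm hm'

end
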